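/- For a, b in the Teichmüller set T_n of GR(4,n), define v_{a,b} = 2^{−n/2}(exp((2πi/4)·tr((a+2b)x)))_{x ∈ T_n} ∈ ℂ^{2ⁿ}. Then for each fixed a ∈ T_n, the set M_a = {v_{a,b} : b ∈ T_n} is an orthonormal basis of ℂ^{2ⁿ}. -/

import Mathlib

open scoped InnerProductSpace

/-- The Galois ring `GR(4,n) = ℤ₄[x]/⟨h(x)⟩`. -/
noncomputable abbrev GR (h : Polynomial (ZMod 4)) : Type :=
  Polynomial (ZMod 4) ⧸ Ideal.span {h}

/-- `ξ = x + ⟨h(x)⟩ ∈ GR(4,n)`. -/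
noncomputable def xi (h : Polynomial (ZMod 4)) : GR h :=
  Ideal.Quotient.mk (Ideal.span {h}) Polynomial.X

open Classical in
/-- The Teichmüller set `T_n = {0, 1, ξ, …, ξ^{2ⁿ−2}}`. -/
noncomputable def Teich (n : ℕ) (h : Polynomial (ZMod 4)) : Finset (GR h) :=
  insert 0 ((Finset.range (2 ^ n - 1)).image fun k => xi h ^ k)

structure IsBasicPrimitive (n : ℕ) (h : Polynomial (ZMod 4)) : Prop where
  monic : h.Monic
  deg : h.natDegree = n
  irred : Irreducible (h.map (ZMod.castHom (by norm_num : (2:ℕ) ∣ 4) (ZMod 2)))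
  prim : orderOf (Ideal.Quotient.mk
      (Ideal.span {h.map (ZMod.castHom (by norm_num : (2:ℕ) ∣ 4) (ZMod 2))})
      Polynomial.X) = 2 ^ n - 1
  xi_order : orderOf (xi h) = 2 ^ n - 1

namespace MaAux

noncomputable section

open Polynomial

def c24 : ZMod 4 →+* ZMod 2 := ZMod.castHom (show (2:ℕ) ∣ 4 by norm_num) (ZMod 2)

variable (h : Polynomial (ZMod 4))

def hbar : Polynomial (ZMod 2) := h.map c24

abbrev Fq := AdjoinRoot (hbar h)

def pr : GR h →+* Fq h :=
  Ideal.Quotient.lift (Ideal.span {h})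
    ((AdjoinRoot.mk (hbar h)).comp (Polynomial.mapRingHom c24))
    (by
      intro p hp
      rw [Ideal.mem_span_singleton] at hp
      simp only [RingHom.comp_apply, Polynomial.coe_mapRingHom]
      rw [AdjoinRoot.mk_eq_zero]
      exact Polynomial.map_dvd _ hp)

lemma pr_mk (p : Polynomial (ZMod 4)) :
    pr h (Ideal.Quotient.mk (Ideal.span {h}) p) = AdjoinRoot.mk (hbar h) (p.map c24) := rfl

lemma pr_xi : pr h (xi h) = AdjoinRoot.root (hbar h) := by
  rw [xi, pr_mk, Polynomial.map_X]
  rfl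

lemma pr_algebraMap (c : ZMod 4) :
    pr h (algebraMap (ZMod 4) (GR h) c) = algebraMap (ZMod 2) (Fq h) (c24 c) := by
  rw [show algebraMap (ZMod 4) (GR h) c
      = Ideal.Quotient.mk (Ideal.span {h}) (Polynomial.C c) from rfl, pr_mk, Polynomial.map_C]
  rfl

variable {h}

lemma pr_algebraMap' (c : ZMod 4) :
    pr h (algebraMap (ZMod 4) (AdjoinRoot h) c) = algebraMap (ZMod 2) (Fq h) (c24 c) :=
  pr_algebraMap h c

lemma two_mul_smul (c : ZMod 4) (v : AdjoinRoot h) :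
    (2 : AdjoinRoot h) * (c • v) = (2 * c) • v := by
  rw [show (2 : AdjoinRoot h) = algebraMap (ZMod 4) (AdjoinRoot h) 2 from (map_ofNat _ 2).symm,
    Algebra.smul_def, Algebra.smul_def, map_mul]
  ring

lemma mem_Teich_iff {n : ℕ} {x : GR h} :
    x ∈ Teich n h ↔ x = 0 ∨ ∃ k, k < 2 ^ n - 1 ∧ xi h ^ k = x := by
  classical
  unfold Teich
  rw [Finset.mem_insert, Finset.mem_image]
  simp only [Finset.mem_range]

lemma zero_mem_Teich {n : ℕ} : (0 : GR h) ∈ Teich n h := mem_Teich_iff.mpr (Or.inl rfl)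

section WithHbp

variable {n : ℕ} (hbp : IsBasicPrimitive n h)
include hbp

lemma hbar_monic : (hbar h).Monic := hbp.monic.map _

lemma hbar_natDegree : (hbar h).natDegree = n := by
  rw [hbar, hbp.monic.natDegree_map, hbp.deg]

lemma order_root : orderOf (AdjoinRoot.root (hbar h)) = 2 ^ n - 1 := hbp.prim

lemma one_le_n : 1 ≤ n := by
  by_contra hn
  push_neg at hn
  have h0 : (hbar h).natDegree = 0 := by rw [hbar_natDegree hbp]; omega
  have h1 : hbar h = 1 :=
    ((hbar_monic hbp).natDegree_eq_zero).mp h0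
  have h2 : Irreducible (hbar h) := hbp.irred
  rw [h1] at h2
  exact h2.not_isUnit isUnit_one

lemma two_mul_repr (r : GR h) :
    (2 : GR h) * r = ∑ i, (2 * (AdjoinRoot.powerBasis' hbp.monic).basis.repr r i) •
      (AdjoinRoot.powerBasis' hbp.monic).basis i := by
  set B := AdjoinRoot.powerBasis' hbp.monic
  obtain ⟨r, rfl⟩ : ∃ r' : AdjoinRoot h, r' = r := ⟨r, rfl⟩
  change (2 : AdjoinRoot h) * r = _
  conv_lhs => rw [← B.basis.sum_repr r]
  rw [Finset.mul_sum]
  exact Finset.sum_congr rfl fun i _ => two_mul_smul _ _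

lemma pr_eq_zero_iff (r : GR h) : pr h r = 0 ↔ 2 * r = 0 := by
  classical
  have hkey : ∀ z : ZMod 4, (c24 z = 0 ↔ 2 * z = 0) := by decide
  haveI : Fact (Irreducible (hbar h)) := ⟨hbp.irred⟩
  set B : PowerBasis (ZMod 4) (AdjoinRoot h) := AdjoinRoot.powerBasis' hbp.monic with hB
  set B2 : PowerBasis (ZMod 2) (Fq h) := AdjoinRoot.powerBasis' (hbar_monic hbp) with hB2
  have hprb : ∀ i : Fin B.dim, pr h (B.basis i) = AdjoinRoot.root (hbar h) ^ (i : ℕ) := by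
    intro i
    rw [B.basis_eq_pow i]
    refine (map_pow (pr h) B.gen i).trans ?_
    congr 1
    rw [show B.gen = AdjoinRoot.root h from rfl, ← pr_xi]
    rfl
  have hsmul : ∀ (c : ZMod 4) (v : AdjoinRoot h), pr h (c • v) = c24 c • pr h v := by
    intro c v
    rw [Algebra.smul_def, Algebra.smul_def, ← pr_algebraMap']
    exact map_mul (pr h) _ _
  have hpr : pr h r
      = ∑ i : Fin B.dim, c24 (B.basis.repr r i) • (AdjoinRoot.root (hbar h)) ^ (i:ℕ) := by
    conv_lhs => rw [← B.basis.sum_repr r]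
    exact (map_sum (pr h) (fun i => (B.basis.repr r i • B.basis i : AdjoinRoot h)) _).trans
      (Finset.sum_congr rfl fun i _ => (hsmul _ _).trans (by rw [hprb]))
  have he : B2.dim = B.dim := by
    rw [show B2.dim = (hbar h).natDegree from rfl, show B.dim = h.natDegree from rfl,
      hbar_natDegree hbp, hbp.deg]
  have hroots_li : LinearIndependent (ZMod 2)
      (fun i : Fin B.dim => (AdjoinRoot.root (hbar h)) ^ (i:ℕ)) := by
    have hli := B2.basis.linearIndependent.comp (finCongr he.symm) (finCongr he.symm).injective
    convert hli using 1
    funext i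
    rw [Function.comp_apply, B2.basis_eq_pow]
    rfl
    rfl
  constructor
  · intro h0
    rw [hpr] at h0
    have hz := Fintype.linearIndependent_iff.mp hroots_li
      (fun i => c24 (B.basis.repr r i)) h0
    rw [two_mul_repr hbp]
    refine Finset.sum_eq_zero fun i _ => ?_
    rw [(hkey _).mp (hz i), zero_smul]
    rfl
  · intro h0
    rw [two_mul_repr hbp] at h0
    have hz := Fintype.linearIndependent_iff.mp B.basis.linearIndependent
      (fun i => 2 * B.basis.repr r i) h0
    rw [hpr]
    refine Finset.sum_eq_zero fun i _ => ?_
    rw [(hkey _).mpr (hz i), zero_smul]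

lemma eq_two_mul_of (r : GR h) (hr : 2 * r = 0) : ∃ t : GR h, r = 2 * t := by
  classical
  have hkey : ∀ z : ZMod 4, 2 * z = 0 → 2 * (if z = 2 then 1 else 0) = z := by decide
  set B : PowerBasis (ZMod 4) (AdjoinRoot h) := AdjoinRoot.powerBasis' hbp.monic with hB
  have hz := Fintype.linearIndependent_iff.mp B.basis.linearIndependent
    (fun i => 2 * B.basis.repr r i) (by rw [← two_mul_repr hbp]; exact hr)
  refine ⟨∑ i, (if B.basis.repr r i = 2 then 1 else 0 : ZMod 4) • B.basis i, ?_⟩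
  change @Eq (AdjoinRoot h) r ((2 : AdjoinRoot h) *
    ∑ i, ((if B.basis.repr r i = 2 then 1 else 0 : ZMod 4) • B.basis i : AdjoinRoot h))
  rw [Finset.mul_sum]
  conv_lhs => rw [← B.basis.sum_repr r]
  refine Finset.sum_congr rfl fun i _ => ?_
  rw [two_mul_smul, hkey _ (hz i)]

def fintypeFq : Fintype (Fq h) :=
  Module.fintypeOfFintype (AdjoinRoot.powerBasis' (hbar_monic hbp)).basis

lemma card_Fq [Fintype (Fq h)] : Fintype.card (Fq h) = 2 ^ n := by
  rw [Module.card_fintype (AdjoinRoot.powerBasis' (hbar_monic hbp)).basis, ZMod.card,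
    Fintype.card_fin]
  congr 1
  exact hbar_natDegree hbp

lemma algebraMap_GR_injective :
    Function.Injective (algebraMap (ZMod 4) (GR h)) := by
  set B : PowerBasis (ZMod 4) (AdjoinRoot h) := AdjoinRoot.powerBasis' hbp.monic with hB
  have hdim : 0 < B.dim := by
    rw [show B.dim = h.natDegree from rfl, hbp.deg]
    exact one_le_n hbp
  set i0 : Fin B.dim := ⟨0, hdim⟩
  have hone : (1 : AdjoinRoot h) = B.basis i0 := by
    rw [B.basis_eq_pow i0]
    simp [i0]
  have key : ∀ c : ZMod 4, B.basis.repr (algebraMap (ZMod 4) (GR h) c) i0 = c := by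
    intro c
    change B.basis.repr (algebraMap (ZMod 4) (AdjoinRoot h) c) i0 = c
    rw [Algebra.algebraMap_eq_smul_one, hone, map_smul, B.basis.repr_self]
    simp
  intro c c' hcc
  rw [← key c, ← key c', hcc]

lemma pos_ord : 0 < 2 ^ n - 1 := by
  have h1 := one_le_n hbp
  have h2 : 2 ^ 1 ≤ 2 ^ n := Nat.pow_le_pow_right (by norm_num) h1
  simp only [pow_one] at h2
  omega

lemma Teich_mul {x y : GR h} (hx : x ∈ Teich n h) (hy : y ∈ Teich n h) :
    x * y ∈ Teich n h := by
  have hpos : 0 < 2 ^ n - 1 := pos_ord hbp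
  rcases mem_Teich_iff.mp hx with rfl | ⟨j, hj, rfl⟩
  · rw [zero_mul]; exact zero_mem_Teich
  rcases mem_Teich_iff.mp hy with rfl | ⟨k, hk, rfl⟩
  · rw [mul_zero]; exact zero_mem_Teich
  refine mem_Teich_iff.mpr (Or.inr ⟨(j + k) % (2 ^ n - 1), Nat.mod_lt _ hpos, ?_⟩)
  rw [← pow_add, ← hbp.xi_order, pow_mod_orderOf]

lemma pr_Teich_surj [Fintype (Fq h)] (y : Fq h) : ∃ x ∈ Teich n h, pr h x = y := by
  classical
  haveI : Fact (Irreducible (hbar h)) := ⟨hbp.irred⟩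
  by_cases hy : y = 0
  · exact ⟨0, zero_mem_Teich, by rw [map_zero, hy]⟩
  have hpos : 0 < 2 ^ n - 1 := pos_ord hbp
  set ρ := AdjoinRoot.root (hbar h) with hρ
  have hord : orderOf ρ = 2 ^ n - 1 := order_root hbp
  have hρ0 : ρ ≠ 0 := by
    intro h0
    have h1 := pow_orderOf_eq_one ρ
    rw [hord, h0, zero_pow (by omega)] at h1
    exact zero_ne_one h1
  set u : (Fq h)ˣ := Units.mk0 ρ hρ0 with hu
  have hordu : orderOf u = 2 ^ n - 1 := by
    rw [← orderOf_units]
    exact hord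
  have hcards : Nat.card (Fq h)ˣ = 2 ^ n - 1 := by
    rw [Nat.card_units, Nat.card_eq_fintype_card, card_Fq hbp]
  have htop : Subgroup.zpowers u = ⊤ := by
    apply Subgroup.eq_top_of_card_eq
    rw [Nat.card_zpowers, hordu, hcards]
  have hmem : Units.mk0 y hy ∈ Submonoid.powers u := by
    rw [mem_powers_iff_mem_zpowers, htop]
    exact Subgroup.mem_top _
  obtain ⟨k, hk⟩ := (Submonoid.mem_powers_iff _ _).mp hmem
  have hky : ρ ^ k = y := by
    have := congrArg (Units.val) hk
    simp at this
    exact this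
  refine ⟨xi h ^ (k % (2 ^ n - 1)),
    mem_Teich_iff.mpr (Or.inr ⟨_, Nat.mod_lt _ hpos, rfl⟩), ?_⟩
  rw [map_pow, pr_xi, ← hρ, ← hord, pow_mod_orderOf, hky]

lemma pr_Teich_image [Fintype (Fq h)] [DecidableEq (Fq h)] :
    (Teich n h).image (pr h) = Finset.univ := by
  apply Finset.eq_univ_of_forall
  intro y
  obtain ⟨x, hx, hxy⟩ := pr_Teich_surj hbp y
  exact Finset.mem_image.mpr ⟨x, hx, hxy⟩

lemma card_Teich : (Teich n h).card = 2 ^ n := by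
  classical
  letI : Fintype (Fq h) := fintypeFq hbp
  have hpos : 0 < 2 ^ n - 1 := pos_ord hbp
  have h1 : (Teich n h).card ≤ ((Finset.range (2 ^ n - 1)).image fun k => xi h ^ k).card + 1 :=
    Finset.card_insert_le _ _
  have h2 : ((Finset.range (2 ^ n - 1)).image fun k => xi h ^ k).card ≤ 2 ^ n - 1 :=
    le_trans Finset.card_image_le (by rw [Finset.card_range])
  have hge : 2 ^ n ≤ (Teich n h).card := by
    calc 2 ^ n = Fintype.card (Fq h) := (card_Fq hbp).symm
    _ = (Finset.univ : Finset (Fq h)).card := Finset.card_univ.symm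
    _ = ((Teich n h).image (pr h)).card := by rw [pr_Teich_image hbp]
    _ ≤ (Teich n h).card := Finset.card_image_le
  omega

lemma pr_injOn : Set.InjOn (pr h) (Teich n h) := by
  classical
  letI : Fintype (Fq h) := fintypeFq hbp
  apply Finset.injOn_of_card_image_eq
  rw [pr_Teich_image hbp, card_Teich hbp, Finset.card_univ, card_Fq hbp]

lemma Teich_decomp (r : GR h) :
    ∃ x ∈ Teich n h, ∃ y ∈ Teich n h, r = x + 2 * y := by
  classical
  letI : Fintype (Fq h) := fintypeFq hbp
  obtain ⟨x, hxT, hx⟩ := pr_Teich_surj hbp (pr h r)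
  have h1 : 2 * (r - x) = 0 := by
    rw [← pr_eq_zero_iff hbp, map_sub, hx, sub_self]
  obtain ⟨t, ht⟩ := eq_two_mul_of hbp _ h1
  obtain ⟨y, hyT, hy⟩ := pr_Teich_surj hbp (pr h t)
  have h2 : 2 * (t - y) = 0 := by
    rw [← pr_eq_zero_iff hbp, map_sub, hy, sub_self]
  refine ⟨x, hxT, y, hyT, ?_⟩
  linear_combination ht + h2

end WithHbp

lemma char_sum_zero {F : Type*} [Field F] [Fintype F] [DecidableEq F] (ψ : F → F)
    (hadd : ∀ x y, ψ (x + y) = ψ x + ψ y) (hval : ∀ x, ψ x = 0 ∨ ψ x = 1)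
    (y₀ : F) (hy₀ : ψ y₀ = 1) (h2 : (2 : F) = 0) :
    ∑ y : F, (if ψ y = 0 then (1 : ℂ) else -1) = 0 := by
  classical
  have hshift : ∑ y : F, (if ψ (y + y₀) = 0 then (1:ℂ) else -1)
      = ∑ y : F, (if ψ y = 0 then (1:ℂ) else -1) :=
    Fintype.sum_equiv (Equiv.addRight y₀) _ _ (fun y => rfl)
  have hflip : ∀ y : F, (if ψ (y + y₀) = 0 then (1:ℂ) else -1)
      = -(if ψ y = 0 then (1:ℂ) else -1) := by
    intro y
    rcases hval y with hy | hy
    · rw [if_pos hy, hadd, hy₀, hy, zero_add, if_neg one_ne_zero]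
    · have hne : ψ y ≠ 0 := by rw [hy]; exact one_ne_zero
      rw [if_neg hne, hadd, hy₀, hy,
        if_pos (show (1:F) + 1 = 0 by linear_combination h2), neg_neg]
  have hSneg : ∑ y : F, (if ψ y = 0 then (1:ℂ) else -1)
      = -∑ y : F, (if ψ y = 0 then (1:ℂ) else -1) := by
    conv_lhs => rw [← hshift]
    rw [Finset.sum_congr rfl fun y _ => hflip y, ← Finset.sum_neg_distrib]
  have h2S : (2:ℂ) * ∑ y : F, (if ψ y = 0 then (1:ℂ) else -1) = 0 := by
    linear_combination hSneg
  rcases mul_eq_zero.mp h2S with hc | hc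
  · exact absurd hc two_ne_zero
  · exact hc

lemma exists_trace_ne_zero {F : Type*} [Field F] [Fintype F] {n : ℕ} (hn : 1 ≤ n)
    (hcard : Fintype.card F = 2 ^ n) :
    ∃ z : F, ∑ k ∈ Finset.range n, z ^ 2 ^ k ≠ 0 := by
  by_contra hc
  push_neg at hc
  set P : Polynomial F := ∑ k ∈ Finset.range n, Polynomial.X ^ 2 ^ k with hP
  have hdeg : P.natDegree ≤ 2 ^ (n - 1) := by
    apply Polynomial.natDegree_sum_le_of_forall_le
    intro k hk
    rw [Polynomial.natDegree_X_pow]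
    exact Nat.pow_le_pow_right (by norm_num)
      (Nat.le_pred_of_lt (Finset.mem_range.mp hk))
  have hPz : P = 0 := by
    apply Polynomial.eq_zero_of_natDegree_lt_card_of_eval_eq_zero' P Finset.univ
    · intro z _
      rw [hP, Polynomial.eval_finset_sum]
      simpa using hc z
    · calc P.natDegree ≤ 2 ^ (n-1) := hdeg
        _ < 2 ^ n := Nat.pow_lt_pow_right (by norm_num) (by omega)
        _ = Fintype.card F := hcard.symm
        _ = (Finset.univ : Finset F).card := Finset.card_univ.symm
  have hco : P.coeff (2 ^ (n - 1)) = 1 := by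
    rw [hP, Polynomial.finset_sum_coeff]
    rw [Finset.sum_eq_single (n - 1)]
    · rw [Polynomial.coeff_X_pow, if_pos rfl]
    · intro k hk hkne
      rw [Polynomial.coeff_X_pow, if_neg]
      intro he
      exact hkne (Nat.pow_right_injective (le_refl 2) he).symm
    · intro hnot
      exact absurd (Finset.mem_range.mpr (by omega)) hnot
  rw [hPz] at hco
  simp at hco

end

end MaAux

/-- The vector `v_{a,b} = 2^{−n/2} (exp((2πi/4)·tr((a+2b)x)))_{x ∈ T_n}` of
`ℂ^{2ⁿ}`, indexed by the Teichmüller set `T_n`. -/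
noncomputable def mv (n : ℕ) (h : Polynomial (ZMod 4)) (tr : GR h → ZMod 4)
    (a b : GR h) : EuclideanSpace ℂ (Teich n h) :=
  WithLp.toLp 2 fun x => (1 / Real.sqrt (2 ^ n) : ℂ) *
    Complex.exp (2 * Real.pi * Complex.I *
      ((tr ((a + 2 * b) * (x : GR h))).val : ℂ) / 4)

open MaAux in
set_option maxHeartbeats 1000000 in
/-- For each fixed `a` in the Teichmüller set, `M_a = {v_{a,b} : b ∈ T_n}` is an
orthonormal basis of `ℂ^{2ⁿ}`.  Here `tr` is the trace map of `GR(4,n)`,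
`tr(x) = ∑_{k<n} σ^k(x)` with Frobenius `σ(a+2b) = a² + 2b²`. -/
theorem Ma_orthonormal_basis (n : ℕ) (h : Polynomial (ZMod 4))
    (hbp : IsBasicPrimitive n h)
    (σ : GR h → GR h)
    (hσ : ∀ a b : GR h, a ∈ Teich n h → b ∈ Teich n h →
      σ (a + 2 * b) = a ^ 2 + 2 * b ^ 2)
    (tr : GR h → ZMod 4)
    (htr : ∀ r : GR h,
      algebraMap (ZMod 4) (GR h) (tr r) = ∑ k ∈ Finset.range n, σ^[k] r)
    (a : GR h) (ha : a ∈ Teich n h) :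
    ∃ B : OrthonormalBasis (Teich n h) ℂ (EuclideanSpace ℂ (Teich n h)),
      ∀ b : Teich n h, B b = mv n h tr a (b : GR h) := by
  classical
  haveI hfact : Fact (Irreducible (hbar h)) := ⟨hbp.irred⟩
  letI : Fintype (Fq h) := fintypeFq hbp
  have hn : 1 ≤ n := one_le_n hbp
  have hinj := algebraMap_GR_injective hbp
  have hcardT : (Teich n h).card = 2 ^ n := card_Teich hbp
  haveI hchar : CharP (Fq h) 2 :=
    charP_of_injective_algebraMap (algebraMap (ZMod 2) (Fq h)).injective 2
  haveI : ExpChar (Fq h) 2 := ExpChar.prime Nat.prime_two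
  have hchar2 : (2 : Fq h) = 0 := by
    have h20 : ((2 : ℕ) : Fq h) = 0 := CharP.cast_eq_zero (Fq h) 2
    simpa using h20
  -- powers of Teichmüller elements
  have hTpow2 : ∀ {x : GR h}, x ∈ Teich n h → ∀ k : ℕ, x ^ 2 ^ k ∈ Teich n h := by
    intro x hx k
    induction k with
    | zero => simpa using hx
    | succ k ih =>
        have hrw : x ^ 2 ^ (k + 1) = x ^ 2 ^ k * x ^ 2 ^ k := by
          rw [← pow_add]
          congr 1
          omega
        rw [hrw]
        exact Teich_mul hbp ih ih
  -- iterates of the Frobenius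
  have hiter : ∀ (k : ℕ) (x y : GR h), x ∈ Teich n h → y ∈ Teich n h →
      σ^[k] (x + 2 * y) = x ^ 2 ^ k + 2 * y ^ 2 ^ k := by
    intro k
    induction k with
    | zero => intro x y _ _; simp
    | succ k ih =>
        intro x y hx hy
        rw [Function.iterate_succ_apply, hσ x y hx hy]
        have hx2 : x ^ 2 ∈ Teich n h := by simpa using hTpow2 hx 1
        have hy2 : y ^ 2 ∈ Teich n h := by simpa using hTpow2 hy 1
        rw [ih (x ^ 2) (y ^ 2) hx2 hy2, ← pow_mul, ← pow_mul]
        rw [show 2 * 2 ^ k = 2 ^ (k + 1) from (pow_succ' 2 k).symm]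
  have htrace : ∀ x y : GR h, x ∈ Teich n h → y ∈ Teich n h →
      algebraMap (ZMod 4) (GR h) (tr (x + 2 * y))
        = ∑ k ∈ Finset.range n, (x ^ 2 ^ k + 2 * y ^ 2 ^ k) := by
    intro x y hx hy
    rw [htr]
    exact Finset.sum_congr rfl fun k _ => hiter k x y hx hy
  have h4 : (2 : GR h) * 2 = 0 := by
    have h22 : (2 : ZMod 4) * 2 = 0 := by decide
    calc (2 : GR h) * 2
        = algebraMap (ZMod 4) (GR h) 2 * algebraMap (ZMod 4) (GR h) 2 := by
          rw [map_ofNat]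
      _ = algebraMap (ZMod 4) (GR h) (2 * 2) := (map_mul _ _ _).symm
      _ = 0 := by rw [h22, map_zero]
  -- normalization constant
  set N : ℂ := (1 / Real.sqrt (2 ^ n) : ℂ) with hN
  have hNre : (starRingEnd ℂ) N = N := by
    rw [hN]
    simp [map_div₀, Complex.conj_ofReal]
  have hNN : N * N = 1 / (2 ^ n : ℂ) := by
    have hs : Real.sqrt (2 ^ n) * Real.sqrt (2 ^ n) = ((2 : ℝ) ^ n) :=
      Real.mul_self_sqrt (by positivity)
    rw [hN, div_mul_div_comm, one_mul, ← Complex.ofReal_mul, hs]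
    norm_num
  -- the family of vectors
  set V : ↥(Teich n h) → EuclideanSpace ℂ (Teich n h) :=
    fun b => mv n h tr a (b : GR h) with hV
  have hVx : ∀ (β : GR h) (x : ↥(Teich n h)),
      mv n h tr a β x = N * Complex.exp (2 * Real.pi * Complex.I *
        ((tr ((a + 2 * β) * (x : GR h))).val : ℂ) / 4) := fun _ _ => rfl
  have hterm : ∀ (β β' : GR h) (x : ↥(Teich n h)),
      (starRingEnd ℂ) (mv n h tr a β x) * (mv n h tr a β' x)
      = (1 / (2 ^ n : ℂ)) * Complex.exp (2 * Real.pi * Complex.I *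
          (((tr ((a + 2 * β') * (x : GR h))).val : ℂ)
            - ((tr ((a + 2 * β) * (x : GR h))).val : ℂ)) / 4) := by
    intro β β' x
    rw [hVx, hVx, map_mul, hNre, ← Complex.exp_conj]
    have hconj : (starRingEnd ℂ) (2 * Real.pi * Complex.I *
        ((tr ((a + 2 * β) * (x : GR h))).val : ℂ) / 4)
        = -(2 * Real.pi * Complex.I * ((tr ((a + 2 * β) * (x : GR h))).val : ℂ) / 4) := by
      simp only [map_div₀, map_mul, Complex.conj_I, Complex.conj_ofReal, map_natCast,
        map_ofNat]
      ring
    rw [hconj, mul_mul_mul_comm, hNN, ← Complex.exp_add]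
    congr 1
    ring
  -- orthonormality
  have horth : Orthonormal ℂ V := by
    rw [orthonormal_iff_ite]
    intro b b'
    rw [PiLp.inner_apply]
    simp only [hV, RCLike.inner_apply']
    by_cases hbb : b = b'
    · subst hbb
      rw [if_pos rfl]
      have hone : ∀ x : ↥(Teich n h),
          (starRingEnd ℂ) (mv n h tr a (b : GR h) x) * (mv n h tr a (b : GR h) x)
          = 1 / (2 ^ n : ℂ) := by
        intro x
        rw [hterm, sub_self, mul_zero, zero_div, Complex.exp_zero, mul_one]
      rw [Finset.sum_congr rfl fun x _ => hone x, Finset.sum_const, Finset.card_univ,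
        Fintype.card_coe, hcardT, nsmul_eq_mul]
      have h2n : ((2 : ℂ) ^ n) ≠ 0 := pow_ne_zero _ two_ne_zero
      push_cast
      field_simp
    · rw [if_neg hbb]
      set β : GR h := (b : GR h) with hβ
      set β' : GR h := (b' : GR h) with hβ'
      have hβT : β ∈ Teich n h := b.2
      have hβ'T : β' ∈ Teich n h := b'.2
      set c : Fq h := pr h β' + pr h β with hc
      have hβne : β ≠ β' := fun hcon => hbb (Subtype.ext hcon)
      have hcne : c ≠ 0 := by
        intro h0
        have h0' : pr h β' + pr h β = 0 := by rw [← hc]; exact h0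
        have heq : pr h β' = - pr h β := eq_neg_of_add_eq_zero_left h0'
        rw [CharTwo.neg_eq] at heq
        exact hβne (pr_injOn hbp hβ'T hβT heq).symm
      set ψ : Fq h → Fq h := fun y => ∑ k ∈ Finset.range n, (c * y) ^ 2 ^ k with hψ
      have hψadd : ∀ y z : Fq h, ψ (y + z) = ψ y + ψ z := by
        intro y z
        simp only [hψ]
        rw [← Finset.sum_add_distrib]
        refine Finset.sum_congr rfl fun k _ => ?_
        rw [mul_add, add_pow_char_pow]
      have hψval : ∀ y : Fq h, ψ y = 0 ∨ ψ y = 1 := by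
        intro y
        have hsq : ψ y ^ 2 = ψ y := by
          simp only [hψ]
          rw [show ((∑ k ∈ Finset.range n, (c * y) ^ 2 ^ k) ^ 2)
              = ∑ k ∈ Finset.range n, ((c * y) ^ 2 ^ k) ^ 2 from sum_pow_char 2 _ _]
          have hstep : ∀ k, ((c * y) ^ 2 ^ k) ^ 2 = (c * y) ^ 2 ^ (k + 1) := by
            intro k
            rw [← pow_mul, ← pow_succ]
          rw [Finset.sum_congr rfl fun k _ => hstep k]
          have hshift : ∑ k ∈ Finset.range n, (c * y) ^ 2 ^ (k + 1)
              = (∑ k ∈ Finset.range n, (c * y) ^ 2 ^ k) + (c * y) ^ 2 ^ n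
                - (c * y) ^ 2 ^ 0 := by
            have h1 := Finset.sum_range_succ' (fun k => (c * y) ^ 2 ^ k) n
            have h2 := Finset.sum_range_succ (fun k => (c * y) ^ 2 ^ k) n
            rw [h2] at h1
            linear_combination -h1
          rw [hshift]
          have hpc : (c * y) ^ 2 ^ n = c * y := by
            rw [← card_Fq hbp]
            exact FiniteField.pow_card _
          rw [hpc, pow_zero, pow_one]
          ring
        have hfac : ψ y * (ψ y - 1) = 0 := by linear_combination hsq
        rcases mul_eq_zero.mp hfac with h0 | h1
        · exact Or.inl h0
        · exact Or.inr (by linear_combination h1)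
      obtain ⟨z, hz⟩ := exists_trace_ne_zero hn (card_Fq hbp)
      have hψy₀ : ψ (c⁻¹ * z) = 1 := by
        have hvne : ψ (c⁻¹ * z) ≠ 0 := by
          simp only [hψ]
          rw [show c * (c⁻¹ * z) = z from by field_simp]
          exact hz
        rcases hψval (c⁻¹ * z) with h0 | h1
        · exact absurd h0 hvne
        · exact h1
      -- pointwise evaluation of the character
      have hkey : ∀ x : ↥(Teich n h),
          Complex.exp (2 * Real.pi * Complex.I *
            (((tr ((a + 2 * β') * (x : GR h))).val : ℂ)
              - ((tr ((a + 2 * β) * (x : GR h))).val : ℂ)) / 4)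
          = (if ψ (pr h (x : GR h)) = 0 then (1 : ℂ) else -1) := by
        intro x
        have hxT : (x : GR h) ∈ Teich n h := x.2
        have haxT : a * (x : GR h) ∈ Teich n h := Teich_mul hbp ha hxT
        have hbxT : β * (x : GR h) ∈ Teich n h := Teich_mul hbp hβT hxT
        have hb'xT : β' * (x : GR h) ∈ Teich n h := Teich_mul hbp hβ'T hxT
        set t : ZMod 4 := tr ((a + 2 * β) * (x : GR h)) with ht
        set t' : ZMod 4 := tr ((a + 2 * β') * (x : GR h)) with ht'
        set s : GR h := ∑ k ∈ Finset.range n,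
          ((β' * (x : GR h)) ^ 2 ^ k - (β * (x : GR h)) ^ 2 ^ k) with hs
        have htv : algebraMap (ZMod 4) (GR h) t
            = ∑ k ∈ Finset.range n,
              ((a * (x : GR h)) ^ 2 ^ k + 2 * (β * (x : GR h)) ^ 2 ^ k) := by
          rw [ht, show (a + 2 * β) * (x : GR h)
            = a * (x : GR h) + 2 * (β * (x : GR h)) from by ring]
          exact htrace _ _ haxT hbxT
        have ht'v : algebraMap (ZMod 4) (GR h) t'
            = ∑ k ∈ Finset.range n,
              ((a * (x : GR h)) ^ 2 ^ k + 2 * (β' * (x : GR h)) ^ 2 ^ k) := by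
          rw [ht', show (a + 2 * β') * (x : GR h)
            = a * (x : GR h) + 2 * (β' * (x : GR h)) from by ring]
          exact htrace _ _ haxT hb'xT
        have halg : algebraMap (ZMod 4) (GR h) (t' - t) = 2 * s := by
          rw [map_sub, htv, ht'v, hs, ← Finset.sum_sub_distrib, Finset.mul_sum]
          exact Finset.sum_congr rfl fun k _ => by ring
        have h2d : 2 * (t' - t) = 0 := by
          apply hinj
          rw [map_mul, map_ofNat, halg, map_zero, ← mul_assoc, h4, zero_mul]
        have hd01 : t' - t = 0 ∨ t' - t = 2 := by
          have hdec : ∀ w : ZMod 4, 2 * w = 0 → w = 0 ∨ w = 2 := by decide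
          exact hdec _ h2d
        have hps : pr h s = ψ (pr h (x : GR h)) := by
          rw [hs, map_sum]
          simp only [hψ]
          refine Finset.sum_congr rfl fun k _ => ?_
          rw [map_sub, map_pow, map_pow, map_mul, map_mul, CharTwo.sub_eq_add,
            ← add_pow_char_pow, ← add_mul, hc]
        have hd0_iff : t' - t = 0 ↔ ψ (pr h (x : GR h)) = 0 := by
          rw [← hps, pr_eq_zero_iff hbp, ← halg]
          constructor
          · intro h0
            rw [h0, map_zero]
          · intro h0
            apply hinj
            rw [h0, map_zero]
        rcases hd01 with hd | hd
        · rw [if_pos (hd0_iff.mp hd)]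
          have hteq : t' = t := by linear_combination hd
          rw [hteq, sub_self, mul_zero, zero_div, Complex.exp_zero]
        · have hne : ψ (pr h (x : GR h)) ≠ 0 := by
            intro h0
            have h00 := hd0_iff.mpr h0
            rw [h00] at hd
            exact absurd hd.symm (by decide)
          rw [if_neg hne]
          have hz4 : (((t'.val : ℤ) - (t.val : ℤ) - 2 : ℤ) : ZMod 4) = 0 := by
            push_cast
            rw [ZMod.natCast_val, ZMod.natCast_val, ZMod.cast_id, ZMod.cast_id]
            rw [show ((t' : ZMod 4) - t - 2 : ZMod 4) = (t' - t) - 2 from by ring, hd]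
            ring
          obtain ⟨m, hm⟩ := (ZMod.intCast_zmod_eq_zero_iff_dvd _ 4).mp hz4
          have hint : ((t'.val : ℤ) - (t.val : ℤ)) = 2 + 4 * m := by omega
          have hcast : ((t'.val : ℂ) - (t.val : ℂ)) = 2 + 4 * (m : ℂ) := by
            exact_mod_cast hint
          rw [show (2 * (Real.pi : ℂ) * Complex.I *
                (((t'.val : ℂ)) - ((t.val : ℂ))) / 4)
              = (Real.pi : ℂ) * Complex.I + (m : ℂ) * (2 * (Real.pi : ℂ) * Complex.I) from by
            rw [hcast]; ring]
          rw [Complex.exp_add, Complex.exp_pi_mul_I,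
            Complex.exp_int_mul_two_pi_mul_I, mul_one]
      -- summing up
      have hsum : ∑ x : ↥(Teich n h),
          (starRingEnd ℂ) (mv n h tr a β x) * (mv n h tr a β' x)
          = (1 / (2 ^ n : ℂ)) * ∑ x : ↥(Teich n h),
              (if ψ (pr h (x : GR h)) = 0 then (1 : ℂ) else -1) := by
        rw [Finset.mul_sum]
        exact Finset.sum_congr rfl fun x _ => by rw [hterm, hkey]
      have htrans : ∑ x : ↥(Teich n h),
          (if ψ (pr h (x : GR h)) = 0 then (1 : ℂ) else -1)
          = ∑ y : Fq h, (if ψ y = 0 then (1 : ℂ) else -1) := by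
        rw [Finset.sum_coe_sort (Teich n h)
          (fun g => (if ψ (pr h g) = 0 then (1 : ℂ) else -1))]
        rw [← Finset.sum_image (g := pr h)
          (f := fun y => if ψ y = 0 then (1 : ℂ) else -1)
          (fun x hx y hy hxy => pr_injOn hbp hx hy hxy), pr_Teich_image hbp]
      rw [hsum, htrans, char_sum_zero ψ hψadd hψval (c⁻¹ * z) hψy₀ hchar2, mul_zero]
  -- assemble the orthonormal basis
  haveI : Nonempty (↥(Teich n h)) := ⟨⟨0, zero_mem_Teich⟩⟩
  have hcard_eq : Fintype.card (↥(Teich n h))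
      = Module.finrank ℂ (EuclideanSpace ℂ (Teich n h)) := finrank_euclideanSpace.symm
  have hB0 := coe_basisOfLinearIndependentOfCardEqFinrank horth.linearIndependent hcard_eq
  refine ⟨(basisOfLinearIndependentOfCardEqFinrank horth.linearIndependent
    hcard_eq).toOrthonormalBasis (by rwa [hB0]), fun b => ?_⟩
  rw [Module.Basis.coe_toOrthonormalBasis, hB0]
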